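/- Let E₁,…,E_N be Hermitian d×d matrices and ρ a density matrix such that (1/2)·sqrt(∑_{i≠j} (Tr({Eᵢ,Eⱼ}ρ))²) ≤ K. Then ∑ᵢ (Tr(Eᵢρ))² ≤ maxᵢ Tr(Eᵢ²ρ) + K. -/

import Mathlib

open ComplexOrder Matrix

private lemma trace_re_nonneg {d : ℕ} {M : Matrix (Fin d) (Fin d) ℂ}
    (hM : M.PosSemidef) : 0 ≤ M.trace.re := by
  have hM' : M.trace = ∑ i, M i i := rfl
  rw [hM', Complex.re_sum]
  apply Finset.sum_nonneg
  intro i _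
  have := hM.re_dotProduct_nonneg (Pi.single i 1)
  simpa [dotProduct, Matrix.mulVec, Pi.single_apply, Finset.sum_ite_eq,
    Finset.sum_ite_eq'] using this

private lemma tr_BBρ_nonneg {d : ℕ} {B ρ : Matrix (Fin d) (Fin d) ℂ}
    (hB : B.IsHermitian) (hρ : ρ.PosSemidef) : 0 ≤ ((B * B * ρ).trace).re := by
  have h1 : (B * B * ρ).trace = (B * ρ * Bᴴ).trace := by
    rw [hB.eq, mul_assoc, Matrix.trace_mul_comm, mul_assoc]
  rw [h1]
  exact trace_re_nonneg (hρ.mul_mul_conjTranspose_same B)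

/-- Variance inequality: `(Tr(Aρ).re)² ≤ Tr(A²ρ).re` for Hermitian `A`. -/
private lemma variance_ineq {d : ℕ} {A ρ : Matrix (Fin d) (Fin d) ℂ}
    (hA : A.IsHermitian) (hρ : ρ.PosSemidef) (hρ1 : ρ.trace = 1) :
    ((A * ρ).trace).re ^ 2 ≤ ((A * A * ρ).trace).re := by
  set c : ℝ := ((A * ρ).trace).re with hc
  set B : Matrix (Fin d) (Fin d) ℂ := A - (c : ℂ) • 1 with hBdef
  have hB : B.IsHermitian := by
    simp [Matrix.IsHermitian, hBdef, Matrix.conjTranspose_sub, Matrix.conjTranspose_smul,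
      hA.eq, Complex.star_def, Complex.conj_ofReal]
  have hexp : B * B * ρ = A * A * ρ - (c : ℂ) • (A * ρ) - (c : ℂ) • (A * ρ)
      + ((c : ℂ) * (c : ℂ)) • ρ := by
    simp only [hBdef, sub_mul, mul_sub, Matrix.smul_mul, Matrix.mul_smul, one_mul, mul_one,
      smul_smul]
    abel
  have h0 := tr_BBρ_nonneg hB hρ
  rw [hexp] at h0
  simp only [Matrix.trace_add, Matrix.trace_sub, Matrix.trace_smul, hρ1, smul_eq_mul, mul_one,
    Complex.add_re, Complex.sub_re, Complex.mul_re, Complex.ofReal_re, Complex.ofReal_im] at h0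
  nlinarith [h0]

private lemma swap_mem_offDiag {N : ℕ} {p : Fin N × Fin N}
    (hp : p ∈ (Finset.univ : Finset (Fin N)).offDiag) :
    p.swap ∈ (Finset.univ : Finset (Fin N)).offDiag := by
  simp only [Finset.mem_offDiag] at hp ⊢
  exact ⟨Finset.mem_univ _, Finset.mem_univ _, Ne.symm hp.2.2⟩

set_option maxHeartbeats 1000000 in
theorem stmt2 {d N : ℕ} [NeZero N] (K : ℝ)
    (E : Fin N → Matrix (Fin d) (Fin d) ℂ) (hE : ∀ i, (E i).IsHermitian)
    (ρ : Matrix (Fin d) (Fin d) ℂ) (hρ : ρ.PosSemidef) (hρ1 : ρ.trace = 1)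
    (hK : (1 / 2) * Real.sqrt (∑ p ∈ Finset.univ.offDiag,
        (((E p.1 * E p.2 + E p.2 * E p.1) * ρ).trace).re ^ 2) ≤ K) :
    ∑ i, (((E i * ρ).trace).re) ^ 2 ≤
      (Finset.univ.sup' Finset.univ_nonempty fun i => ((E i * E i * ρ).trace).re) + K := by
  classical
  set a : Fin N → ℝ := fun i => ((E i * ρ).trace).re with ha
  set S : ℝ := ∑ i, a i ^ 2 with hS
  set M : ℝ := Finset.univ.sup' Finset.univ_nonempty fun i => ((E i * E i * ρ).trace).re with hM
  set t : Fin N → Fin N → ℝ := fun i j => ((E i * E j * ρ).trace).re with ht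
  set s : Fin N × Fin N → ℝ :=
    fun p => (((E p.1 * E p.2 + E p.2 * E p.1) * ρ).trace).re with hs
  have hSnn : 0 ≤ S := Finset.sum_nonneg fun i _ => sq_nonneg _
  obtain ⟨i0⟩ := (inferInstance : Nonempty (Fin N))
  have hMnn : 0 ≤ M := by
    have h0 := tr_BBρ_nonneg (hE i0) hρ
    rw [hM]
    exact h0.trans (Finset.le_sup' (fun i => ((E i * E i * ρ).trace).re) (Finset.mem_univ i0))
  have hKnn : 0 ≤ K := le_trans (by positivity) hK
  -- the operator A = ∑ aᵢ • Eᵢ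
  set A : Matrix (Fin d) (Fin d) ℂ := ∑ i, (a i : ℂ) • E i with hA
  have hAH : A.IsHermitian := by
    rw [Matrix.IsHermitian, hA, Matrix.conjTranspose_sum]
    refine Finset.sum_congr rfl fun i _ => ?_
    rw [Matrix.conjTranspose_smul, (hE i).eq, Complex.star_def, Complex.conj_ofReal]
  have hT1 : ((A * ρ).trace).re = S := by
    rw [hA, Finset.sum_mul, Matrix.trace_sum, Complex.re_sum]
    refine Finset.sum_congr rfl fun i _ => ?_
    rw [Matrix.smul_mul, Matrix.trace_smul]
    simp [Complex.smul_re, sq]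
    exact Or.inl rfl
  have hT2 : ((A * A * ρ).trace).re
      = ∑ p ∈ (Finset.univ ×ˢ Finset.univ : Finset (Fin N × Fin N)),
          a p.1 * a p.2 * t p.1 p.2 := by
    have : A * A * ρ = ∑ p ∈ (Finset.univ ×ˢ Finset.univ : Finset (Fin N × Fin N)),
        ((a p.1 : ℂ) * (a p.2 : ℂ)) • (E p.1 * E p.2 * ρ) := by
      rw [hA, Finset.sum_mul_sum, Finset.sum_mul, Finset.sum_product]
      refine Finset.sum_congr rfl fun i _ => ?_
      rw [Finset.sum_mul]
      refine Finset.sum_congr rfl fun j _ => ?_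
      simp [Matrix.smul_mul, Matrix.mul_smul, smul_smul, mul_comm, ← Complex.coe_smul]
    rw [this, Matrix.trace_sum, Complex.re_sum]
    refine Finset.sum_congr rfl fun p _ => ?_
    rw [Matrix.trace_smul]
    simp [Complex.smul_re, Complex.mul_re, Complex.ofReal_re, Complex.ofReal_im, ht]
  -- split into diagonal and off-diagonal parts
  have hsplit : ((A * A * ρ).trace).re
      = (∑ i, a i ^ 2 * t i i) + ∑ p ∈ Finset.univ.offDiag, a p.1 * a p.2 * t p.1 p.2 := by
    rw [hT2, ← Finset.diag_union_offDiag,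
      Finset.sum_union (Finset.disjoint_diag_offDiag _), Finset.sum_diag]
    congr 1
    exact Finset.sum_congr rfl fun i _ => by ring
  -- diagonal bound
  have hdiag : (∑ i, a i ^ 2 * t i i) ≤ S * M := by
    rw [hS, Finset.sum_mul]
    refine Finset.sum_le_sum fun i _ => ?_
    have hti : t i i ≤ M := by
      rw [hM]
      exact Finset.le_sup' (fun i => ((E i * E i * ρ).trace).re) (Finset.mem_univ i)
    exact mul_le_mul_of_nonneg_left hti (sq_nonneg _)
  -- symmetrization of the off-diagonal sum
  have hsym : ∑ p ∈ Finset.univ.offDiag, a p.1 * a p.2 * t p.2 p.1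
      = ∑ p ∈ Finset.univ.offDiag, a p.1 * a p.2 * t p.1 p.2 := by
    refine Finset.sum_nbij' (fun p => p.swap) (fun p => p.swap)
      (fun p hp => swap_mem_offDiag hp) (fun p hp => swap_mem_offDiag hp)
      (fun p _ => Prod.swap_swap p) (fun p _ => Prod.swap_swap p) (fun p _ => ?_)
    simp only [Prod.fst_swap, Prod.snd_swap]
    ring
  have hstij : ∀ p : Fin N × Fin N, s p = t p.1 p.2 + t p.2 p.1 := by
    intro p
    simp [hs, ht, add_mul, Matrix.trace_add]
  have hoff : ∑ p ∈ Finset.univ.offDiag, a p.1 * a p.2 * t p.1 p.2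
      = (1 / 2) * ∑ p ∈ Finset.univ.offDiag, a p.1 * a p.2 * s p := by
    have : ∑ p ∈ Finset.univ.offDiag, a p.1 * a p.2 * s p
        = ∑ p ∈ Finset.univ.offDiag, (a p.1 * a p.2 * t p.1 p.2
          + a p.1 * a p.2 * t p.2 p.1) := by
      refine Finset.sum_congr rfl fun p _ => ?_
      rw [hstij p]; ring
    rw [this, Finset.sum_add_distrib, hsym]
    ring
  -- Cauchy–Schwarz on the off-diagonal sum
  have hCS : ∑ p ∈ Finset.univ.offDiag, a p.1 * a p.2 * s p
      ≤ S * Real.sqrt (∑ p ∈ Finset.univ.offDiag, s p ^ 2) := by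
    have h1 : (∑ p ∈ Finset.univ.offDiag, (a p.1 * a p.2) * s p) ^ 2
        ≤ (∑ p ∈ Finset.univ.offDiag, (a p.1 * a p.2) ^ 2)
          * ∑ p ∈ Finset.univ.offDiag, s p ^ 2 :=
      Finset.sum_mul_sq_le_sq_mul_sq _ _ _
    have h2 : (∑ p ∈ Finset.univ.offDiag, (a p.1 * a p.2) ^ 2) ≤ S ^ 2 := by
      have hsub : (Finset.univ : Finset (Fin N)).offDiag
          ⊆ (Finset.univ ×ˢ Finset.univ : Finset (Fin N × Fin N)) := by
        rw [← Finset.diag_union_offDiag]; exact Finset.subset_union_right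
      calc (∑ p ∈ Finset.univ.offDiag, (a p.1 * a p.2) ^ 2)
          ≤ ∑ p ∈ (Finset.univ ×ˢ Finset.univ : Finset (Fin N × Fin N)),
              (a p.1 * a p.2) ^ 2 :=
            Finset.sum_le_sum_of_subset_of_nonneg hsub fun p _ _ => sq_nonneg _
        _ = S ^ 2 := by
            rw [hS, sq, Finset.sum_mul_sum, Finset.sum_product]
            exact Finset.sum_congr rfl fun i _ => Finset.sum_congr rfl fun j _ => by ring
    calc ∑ p ∈ Finset.univ.offDiag, a p.1 * a p.2 * s p
        ≤ |∑ p ∈ Finset.univ.offDiag, a p.1 * a p.2 * s p| := le_abs_self _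
      _ = Real.sqrt ((∑ p ∈ Finset.univ.offDiag, a p.1 * a p.2 * s p) ^ 2) := by
          rw [Real.sqrt_sq_eq_abs]
      _ ≤ Real.sqrt (S ^ 2 * ∑ p ∈ Finset.univ.offDiag, s p ^ 2) := by
          apply Real.sqrt_le_sqrt
          exact h1.trans (mul_le_mul_of_nonneg_right h2
            (Finset.sum_nonneg fun p _ => sq_nonneg _))
      _ = S * Real.sqrt (∑ p ∈ Finset.univ.offDiag, s p ^ 2) := by
          rw [Real.sqrt_mul (sq_nonneg _), Real.sqrt_sq hSnn]
  -- combine: S² ≤ S·(M + K)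
  have hmain : S ^ 2 ≤ S * (M + K) := by
    have hvar := variance_ineq hAH hρ hρ1
    rw [hT1] at hvar
    have hbound : ((A * A * ρ).trace).re ≤ S * M + S * K := by
      rw [hsplit, hoff]
      have h3 : (1 / 2) * ∑ p ∈ Finset.univ.offDiag, a p.1 * a p.2 * s p ≤ S * K := by
        calc (1 / 2) * ∑ p ∈ Finset.univ.offDiag, a p.1 * a p.2 * s p
            ≤ (1 / 2) * (S * Real.sqrt (∑ p ∈ Finset.univ.offDiag, s p ^ 2)) := by
              linarith [hCS]
          _ = S * ((1 / 2) * Real.sqrt (∑ p ∈ Finset.univ.offDiag, s p ^ 2)) := by ring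
          _ ≤ S * K := mul_le_mul_of_nonneg_left hK hSnn
      linarith [hdiag]
    linarith [hvar.trans hbound]
  -- conclude
  rcases eq_or_lt_of_le hSnn with h0 | hpos
  · show S ≤ M + K
    linarith
  · show S ≤ M + K
    nlinarith [hmain]
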